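/- arXiv:1804.10471 — 4 statements merged into one kernel-verified Lean document; each statement's English description precedes it below -/
import Mathlib

section
/- Let Γ be a countable discrete group in which every conjugacy class of a non-identity element is infinite (Γ is i.c.c.). Consider the unitary conjugation representation π of Γ on ℓ²(Γ, ℂ) determined by (π(g) f)(h) = f(g⁻¹ h g). Then every finite-dimensional subspace V ⊆ ℓ²(Γ, ℂ) satisfying π(g) V = V for all g ∈ Γ is contained in the one-dimensional span of δ_e, the indicator function of the identity element. (In particular, the conjugation action of an i.c.c. group on its group von Neumann algebra is weakly mixing.) -/
open scoped ENNReal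

set_option synthInstance.maxHeartbeats 1000000
set_option maxHeartbeats 1000000

/-- Weak mixing of the conjugation action of an i.c.c. group: if `Γ` is a countable
group all of whose nontrivial conjugacy classes are infinite, then every
finite-dimensional subspace `V` of `ℓ²(Γ, ℂ)` that is invariant under the conjugation
representation `(π(g) f)(h) = f(g⁻¹ h g)` (i.e. `π(g) V = V` for all `g`) is contained
in the span of `δ_e`. -/
theorem icc_conjugation_weakly_mixing
    {Γ : Type*} [Group Γ] [Countable Γ] [DecidableEq Γ]
    (hicc : ∀ γ : Γ, γ ≠ 1 → (Set.range fun h : Γ => h * γ * h⁻¹).Infinite)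
    (V : Submodule ℂ (lp (fun _ : Γ => ℂ) 2))
    (hfd : FiniteDimensional ℂ V)
    (hinv : ∀ g : Γ, ∀ f : lp (fun _ : Γ => ℂ) 2,
      f ∈ V ↔ ∃ f' ∈ V, ∀ h : Γ, f h = f' (g⁻¹ * h * g)) :
    V ≤ Submodule.span ℂ {lp.single 2 (1 : Γ) (1 : ℂ)} := by
  intro f hf
  have key : ∀ γ : Γ, γ ≠ 1 → f γ = 0 := by
    intro γ hγ
    set c : ℂ := f γ with hc
    -- infinitely many distinct conjugates
    obtain emb := (hicc γ hγ).natEmbedding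
    have hg : ∀ k : ℕ, ∃ g : Γ, g * γ * g⁻¹ = (emb k : Γ) := fun k => (emb k).2
    choose g hgk using hg
    -- invariant translates of f
    have hV : ∀ k : ℕ, ∃ f' ∈ V, ∀ h : Γ, f h = f' ((g k)⁻¹⁻¹ * h * (g k)⁻¹) :=
      fun k => (hinv (g k)⁻¹ f).mp hf
    choose F hFmem hFeq using hV
    -- pointwise formula for F k
    have hFpt : ∀ k : ℕ, ∀ m : Γ, F k m = f ((g k)⁻¹ * m * (g k)) := by
      intro k m
      have := hFeq k ((g k)⁻¹ * m * (g k))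
      rw [this]; congr 1; group
    have hFc : ∀ k : ℕ, F k (emb k : Γ) = c := by
      intro k
      rw [hFpt k, hc]
      congr 1
      rw [← hgk k]; group
    -- norms of F k
    have h2 : (0:ℝ) < (2 : ℝ≥0∞).toReal := by norm_num
    have hnorm : ∀ k : ℕ, ‖F k‖ = ‖f‖ := by
      intro k
      rw [lp.norm_eq_tsum_rpow h2, lp.norm_eq_tsum_rpow h2]
      congr 1
      have he := ((Equiv.mulLeft (g k)⁻¹).trans (Equiv.mulRight (g k))).tsum_eq
        (fun m => ‖f m‖ ^ (2 : ℝ≥0∞).toReal)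
      simp only [Equiv.trans_apply, Equiv.coe_mulLeft, Equiv.coe_mulRight] at he
      rw [← he]
      exact tsum_congr fun m => by rw [hFpt k m]
    -- sequence in V
    set v : ℕ → V := fun k => ⟨F k, hFmem k⟩ with hv
    have hball : ∀ k, v k ∈ Metric.closedBall (0 : V) ‖f‖ := by
      intro k
      simp only [Metric.mem_closedBall, dist_zero_right, hv]
      exact le_of_eq (hnorm k)
    have : ProperSpace V := FiniteDimensional.proper ℂ V
    obtain ⟨L, -, φ, hφ, hlim⟩ :=
      (isCompact_closedBall (0 : V) ‖f‖).tendsto_subseq hball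
    -- the coordinates of L along the subsequence tend to c
    have hLc : Filter.Tendsto (fun k => (L : lp (fun _ : Γ => ℂ) 2) (emb (φ k) : Γ))
        Filter.atTop (nhds c) := by
      rw [tendsto_iff_dist_tendsto_zero]
      have hb : ∀ k, dist ((L : lp (fun _ : Γ => ℂ) 2) (emb (φ k) : Γ)) c
          ≤ dist (v (φ k)) L := by
        intro k
        have h1 : ‖((L : lp (fun _ : Γ => ℂ) 2) - F (φ k)) (emb (φ k) : Γ)‖
            ≤ ‖(L : lp (fun _ : Γ => ℂ) 2) - F (φ k)‖ :=
          lp.norm_apply_le_norm two_ne_zero _ _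
        rw [dist_eq_norm, dist_eq_norm]
        calc ‖(L : lp (fun _ : Γ => ℂ) 2) (emb (φ k) : Γ) - c‖
            = ‖((L : lp (fun _ : Γ => ℂ) 2) - F (φ k)) (emb (φ k) : Γ)‖ := by
              rw [← hFc (φ k)]; rfl
          _ ≤ ‖(L : lp (fun _ : Γ => ℂ) 2) - F (φ k)‖ := h1
          _ = ‖v (φ k) - L‖ := by rw [← neg_sub (F (φ k) : lp (fun _ : Γ => ℂ) 2), norm_neg]; rfl
      have h0 : Filter.Tendsto (fun k => dist (v (φ k)) L) Filter.atTop (nhds 0) := by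
        rw [← tendsto_iff_dist_tendsto_zero] at *
        exact hlim
      exact squeeze_zero (fun k => dist_nonneg) hb h0
    -- coordinates of L tend to 0 along any injective sequence
    have hL0 : Filter.Tendsto (fun k => (L : lp (fun _ : Γ => ℂ) 2) (emb (φ k) : Γ))
        Filter.atTop (nhds 0) := by
      have hsum : Summable (fun x : Γ => ‖(L : lp (fun _ : Γ => ℂ) 2) x‖ ^ (2 : ℝ≥0∞).toReal) :=
        (lp.memℓp (L : lp (fun _ : Γ => ℂ) 2)).summable h2
      have hcof : Filter.Tendsto (fun x : Γ => ‖(L : lp (fun _ : Γ => ℂ) 2) x‖ ^ (2 : ℝ≥0∞).toReal)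
          Filter.cofinite (nhds 0) := hsum.tendsto_cofinite_zero
      have hinj : Function.Injective (fun k : ℕ => (emb (φ k) : Γ)) := by
        intro a b hab
        exact hφ.injective (emb.injective (Subtype.coe_injective hab))
      have hseq : Filter.Tendsto (fun k : ℕ => (emb (φ k) : Γ)) Filter.atTop Filter.cofinite := by
        rw [← Nat.cofinite_eq_atTop]
        exact hinj.tendsto_cofinite
      have := hcof.comp hseq
      -- from norm^2 → 0 deduce value → 0
      rw [tendsto_zero_iff_norm_tendsto_zero]
      have hsqrt := (Real.continuous_sqrt.tendsto 0).comp this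
      simp only [Real.sqrt_zero] at hsqrt
      convert hsqrt using 2 with k
      simp only [Function.comp]
      rw [show (2 : ℝ≥0∞).toReal = (2:ℝ) by norm_num, Real.rpow_two, Real.sqrt_sq (norm_nonneg _)]
    exact (tendsto_nhds_unique hLc hL0)
  -- conclude
  have hfe : f = f 1 • lp.single 2 (1 : Γ) (1 : ℂ) := by
    ext h
    by_cases h1 : h = 1
    · subst h1; simp [lp.single_apply]
    · simp [lp.single_apply, h1, key h h1]
  rw [hfe]
  exact Submodule.smul_mem _ _ (Submodule.subset_span rfl)
end

section
/- Let Γ be a countable group acting by measure-preserving transformations on a standard probability space (Ω, μ), and let c : Γ × Ω → ℂ be a measurable map with |c(g, ω)| = 1 for all g, ω, satisfying the cocycle identity c(gh, ω) = c(h, ω) · c(g, h·ω) for all g, h ∈ Γ and all ω ∈ Ω. Assume the fixed-point set {ω : g·ω = ω} is measurable for each g ∈ Γ. Define φ(ω)(g) = c(g, ω) if g·ω = ω and φ(ω)(g) = 0 otherwise. Then φ is an invariant random positive definite function: for almost every ω ∈ Ω the function φ(ω) : Γ → ℂ is a normalized positive definite function, and for all g, h ∈ Γ and almost every ω one has φ(h·ω)(g)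 = φ(ω)(h⁻¹ g h). -/
open MeasureTheory
open scoped ComplexOrder

/-- A function `φ : Γ → ℂ` is positive definite if for every `n` and every tuple
`g : Fin n → Γ`, the matrix `[φ((g j)⁻¹ * g i)]` is positive semidefinite. -/
def IsPositiveDefinite {Γ : Type*} [Group Γ] (φ : Γ → ℂ) : Prop :=
  ∀ (n : ℕ) (g : Fin n → Γ), (Matrix.of fun i j : Fin n => φ ((g j)⁻¹ * g i)).PosSemidef

/-- A normalized positive definite function. -/
def IsNormalizedPositiveDefinite {Γ : Type*} [Group Γ] (φ : Γ → ℂ) : Prop :=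
  IsPositiveDefinite φ ∧ φ 1 = 1

/-- Given a p.m.p. action of a countable group `Γ` on a standard probability space
`(Ω, μ)` and a unimodular cocycle `c : Γ × Ω → S¹`, the function
`φ(ω)(g) = c(g, ω)` if `g·ω = ω` and `0` otherwise is an invariant random positive
definite function. -/
theorem cocycle_on_stabilizer_is_irpdf
    {Γ Ω : Type*} [Group Γ] [Countable Γ]
    [MeasurableSpace Ω] [StandardBorelSpace Ω]
    (μ : Measure Ω) [IsProbabilityMeasure μ]
    [MulAction Γ Ω]
    (hmp : ∀ g : Γ, MeasurePreserving (fun ω => g • ω) μ μ)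
    (c : Γ → Ω → ℂ)
    (hcmeas : ∀ g : Γ, Measurable (c g))
    (hcmod : ∀ (g : Γ) (ω : Ω), ‖c g ω‖ = 1)
    (hcocycle : ∀ (g h : Γ) (ω : Ω), c (g * h) ω = c h ω * c g (h • ω))
    (hfix : ∀ g : Γ, MeasurableSet {ω : Ω | g • ω = ω})
    (φ : Ω → Γ → ℂ)
    (hφ_fix : ∀ (ω : Ω) (g : Γ), g • ω = ω → φ ω g = c g ω)
    (hφ_nfix : ∀ (ω : Ω) (g : Γ), g • ω ≠ ω → φ ω g = 0) :
    (∀ g : Γ, Measurable fun ω => φ ω g) ∧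
      (∀ᵐ ω ∂μ, IsNormalizedPositiveDefinite (φ ω)) ∧
      (∀ g h : Γ, ∀ᵐ ω ∂μ, φ (h • ω) g = φ ω (h⁻¹ * g * h)) := by
  classical
  have hc0 : ∀ (g : Γ) (ω : Ω), c g ω ≠ 0 := by
    intro g ω h
    have := hcmod g ω
    rw [h] at this
    simp at this
  have hcc : ∀ (g : Γ) (ω : Ω), c g ω * starRingEnd ℂ (c g ω) = 1 := by
    intro g ω
    rw [Complex.mul_conj]
    norm_cast
    rw [Complex.normSq_eq_norm_sq, hcmod]
    norm_num
  have hcone : ∀ ω : Ω, c 1 ω = 1 := by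
    intro ω
    have h := hcocycle 1 1 ω
    rw [one_mul, one_smul] at h
    exact mul_left_cancel₀ (hc0 1 ω) (h.symm.trans (mul_one _).symm)
  have key : ∀ (ω : Ω) (a b : Γ),
      φ ω (b⁻¹ * a) = if a • ω = b • ω then c a ω * starRingEnd ℂ (c b ω) else 0 := by
    intro ω a b
    by_cases h : a • ω = b • ω
    · have hfixab : (b⁻¹ * a) • ω = ω := by rw [mul_smul, h, inv_smul_smul]
      rw [if_pos h, hφ_fix ω _ hfixab]
      have hco := hcocycle b (b⁻¹ * a) ω
      rw [mul_inv_cancel_left, hfixab] at hco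
      rw [hco, mul_assoc, hcc, mul_one]
    · have hfixab : (b⁻¹ * a) • ω ≠ ω := by
        intro hh
        apply h
        rw [mul_smul, inv_smul_eq_iff] at hh
        exact hh
      rw [if_neg h, hφ_nfix ω _ hfixab]
  refine ⟨?_, ?_, ?_⟩
  · intro g
    have heq : (fun ω => φ ω g) = fun ω => if g • ω = ω then c g ω else 0 := by
      funext ω
      by_cases h : g • ω = ω
      · rw [if_pos h, hφ_fix ω g h]
      · rw [if_neg h, hφ_nfix ω g h]
    rw [heq]
    exact Measurable.ite (hfix g) (hcmeas g) measurable_const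
  · refine Filter.Eventually.of_forall fun ω => ⟨?_, ?_⟩
    · intro n g
      set T : Finset Ω := Finset.univ.image (fun k : Fin n => g k • ω) with hT
      let A : Matrix {t // t ∈ T} (Fin n) ℂ :=
        Matrix.of fun t i => if g i • ω = t.1 then starRingEnd ℂ (c (g i) ω) else 0
      have hM : (Matrix.of fun i j : Fin n => φ ω ((g j)⁻¹ * g i)) = A.conjTranspose * A := by
        ext i j
        rw [Matrix.mul_apply]
        have hstar : ∀ x : {t // t ∈ T},
            A.conjTranspose i x * A x j =
              if g i • ω = ↑x then
                (if g j • ω = ↑x then c (g i) ω * starRingEnd ℂ (c (g j) ω) else 0) else 0 := by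
          intro x
          simp only [A, Matrix.conjTranspose_apply, Matrix.of_apply]
          split_ifs <;> simp
        rw [Finset.sum_congr rfl fun x _ => hstar x, Finset.univ_eq_attach,
          Finset.sum_attach T fun t =>
            if g i • ω = t then
              (if g j • ω = t then c (g i) ω * starRingEnd ℂ (c (g j) ω) else 0) else 0,
          Finset.sum_ite_eq T (g i • ω)]
        have hmem : g i • ω ∈ T := Finset.mem_image.2 ⟨i, Finset.mem_univ _, rfl⟩
        rw [if_pos hmem, Matrix.of_apply, key ω (g i) (g j)]
        simp [eq_comm]
      rw [hM]
      exact Matrix.posSemidef_conjTranspose_mul_self A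
    · rw [hφ_fix ω 1 (one_smul Γ ω), hcone]
  · intro g h
    refine Filter.Eventually.of_forall fun ω => ?_
    have hiff : g • (h • ω) = h • ω ↔ (h⁻¹ * g * h) • ω = ω := by
      constructor
      · intro hh
        rw [mul_smul, mul_smul, hh, inv_smul_smul]
      · intro hh
        calc g • (h • ω) = (g * h) • ω := (mul_smul g h ω).symm
          _ = (h * (h⁻¹ * g * h)) • ω := by group
          _ = h • ((h⁻¹ * g * h) • ω) := mul_smul _ _ _
          _ = h • ω := by rw [hh]
    by_cases hf : (h⁻¹ * g * h) • ω = ω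
    · rw [hφ_fix _ _ (hiff.2 hf), hφ_fix _ _ hf]
      have hco1 := hcocycle g h ω
      have hco2 := hcocycle h (h⁻¹ * g * h) ω
      rw [hf] at hco2
      rw [show h * (h⁻¹ * g * h) = g * h by group] at hco2
      rw [hco2] at hco1
      exact mul_left_cancel₀ (hc0 h ω)
        (show c h ω * c g (h • ω) = c h ω * c (h⁻¹ * g * h) ω by rw [← hco1, mul_comm])
    · rw [hφ_nfix _ _ (fun hh => hf (hiff.1 hh)), hφ_nfix _ _ hf]
end

section
/- Let Γ be a countable group acting by measure-preserving transformations on a standard probability space (Ω, μ), and let φ be an invariant random positive definite function on Γ over this action. Then the function τ : Γ → ℂ defined by τ(γ) = ∫_Ω φ(ω)(γ) dμ(ω) is a character: τ is a normalized positive definite function on Γ and τ(h⁻¹ g h) = τ(g) for all g, h ∈ Γ. -/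
open MeasureTheory
open scoped ComplexOrder ComplexConjugate

lemma IsPositiveDefinite.conj_eq {Γ : Type*} [Group Γ] {φ : Γ → ℂ}
    (h : IsPositiveDefinite φ) (a b : Γ) : conj (φ (b⁻¹ * a)) = φ (a⁻¹ * b) := by
  have H := (h 2 ![a, b]).isHermitian
  have h1 := congrFun (congrFun H 1) 0
  simpa [Matrix.conjTranspose_apply] using h1

lemma IsNormalizedPositiveDefinite.norm_le_one {Γ : Type*} [Group Γ] {φ : Γ → ℂ}
    (h : IsNormalizedPositiveDefinite φ) (γ : Γ) : ‖φ γ‖ ≤ 1 := by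
  have hq := (h.1 2 ![1, γ]).dotProduct_mulVec_nonneg ![1, -φ γ]
  have hherm : φ γ⁻¹ = conj (φ γ) := by simpa using (h.1.conj_eq γ 1).symm
  have hzz : conj (φ γ) * φ γ = ((‖φ γ‖ ^ 2 : ℝ) : ℂ) := by
    rw [mul_comm, Complex.mul_conj]
    norm_cast
    simp [Complex.normSq_eq_norm_sq]
  have hQ : dotProduct (star ![1, -φ γ])
      ((Matrix.of fun i j : Fin 2 => φ ((![1, γ] j)⁻¹ * ![1, γ] i)).mulVec ![1, -φ γ])
      = 1 - ((‖φ γ‖ ^ 2 : ℝ) : ℂ) := by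
    rw [← hzz]
    simp [dotProduct, Matrix.mulVec, Fin.sum_univ_two, hherm, h.2]
    ring
  rw [hQ] at hq
  have h0 : (0 : ℝ) ≤ 1 - ‖φ γ‖ ^ 2 := by
    have h' := (Complex.le_def.mp hq).1
    simp only [Complex.zero_re, Complex.sub_re, Complex.one_re, Complex.ofReal_re] at h'
    linarith
  nlinarith [norm_nonneg (φ γ)]

lemma integral_nonneg_complex {Ω : Type*} [MeasurableSpace Ω] {μ : Measure Ω}
    {f : Ω → ℂ} (hf : Integrable f μ) (h : ∀ᵐ ω ∂μ, 0 ≤ f ω) :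
    0 ≤ ∫ ω, f ω ∂μ := by
  rw [Complex.le_def]
  constructor
  · have := integral_re hf (μ := μ)
    simp only [RCLike.re_to_complex] at this
    simp only [Complex.zero_re]
    rw [← this]
    refine integral_nonneg_of_ae ?_
    filter_upwards [h] with ω hω
    exact (Complex.le_def.mp hω).1
  · have := integral_im hf (μ := μ)
    simp only [RCLike.im_to_complex] at this
    simp only [Complex.zero_im]
    rw [← this]
    have : ∫ ω, (f ω).im ∂μ = ∫ _ω, (0:ℝ) ∂μ := by
      refine integral_congr_ae ?_
      filter_upwards [h] with ω hω
      exact ((Complex.le_def.mp hω).2).symm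
    simp [this]

/-- The expectation of an invariant random positive definite function is a character:
`τ(γ) = ∫_Ω φ(ω)(γ) dμ(ω)` is a normalized positive definite function which is
invariant under conjugation. -/
theorem expectation_of_irpdf_is_character
    {Γ Ω : Type*} [Group Γ] [Countable Γ]
    [MeasurableSpace Ω] [StandardBorelSpace Ω]
    (μ : Measure Ω) [IsProbabilityMeasure μ]
    [MulAction Γ Ω]
    (hmp : ∀ g : Γ, MeasurePreserving (fun ω => g • ω) μ μ)
    (φ : Ω → Γ → ℂ)
    (hmeas : ∀ γ : Γ, Measurable fun ω => φ ω γ)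
    (hpd : ∀ᵐ ω ∂μ, IsNormalizedPositiveDefinite (φ ω))
    (hinv : ∀ g h : Γ, ∀ᵐ ω ∂μ, φ (g • ω) h = φ ω (g⁻¹ * h * g)) :
    IsNormalizedPositiveDefinite (fun γ => ∫ ω, φ ω γ ∂μ) ∧
      ∀ g h : Γ, ∫ ω, φ ω (h⁻¹ * g * h) ∂μ = ∫ ω, φ ω g ∂μ := by
  -- integrability
  have hint : ∀ γ : Γ, Integrable (fun ω => φ ω γ) μ := by
    intro γ
    refine ⟨(hmeas γ).aestronglyMeasurable, HasFiniteIntegral.of_bounded (C := 1) ?_⟩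
    filter_upwards [hpd] with ω hω
    exact hω.norm_le_one γ
  refine ⟨⟨?_, ?_⟩, ?_⟩
  · -- positive definiteness
    intro n g
    refine Matrix.PosSemidef.of_dotProduct_mulVec_nonneg ?_ ?_
    · -- hermitian
      ext i j
      rw [Matrix.conjTranspose_apply]
      simp only [Matrix.of_apply, RCLike.star_def]
      rw [← integral_conj]
      refine integral_congr_ae ?_
      filter_upwards [hpd] with ω hω
      exact hω.1.conj_eq (g j) (g i)
    · intro x
      have key : dotProduct (star x)
          ((Matrix.of fun i j : Fin n => ∫ ω, φ ω ((g j)⁻¹ * g i) ∂μ).mulVec x)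
          = ∫ ω, dotProduct (star x)
              ((Matrix.of fun i j : Fin n => φ ω ((g j)⁻¹ * g i)).mulVec x) ∂μ := by
        simp only [dotProduct, Matrix.mulVec, Matrix.of_apply, Pi.star_apply]
        rw [integral_finset_sum]
        · refine Finset.sum_congr rfl fun i _ => ?_
          rw [integral_const_mul, integral_finset_sum]
          · congr 1
            refine Finset.sum_congr rfl fun j _ => ?_
            rw [integral_mul_const]
          · exact fun j _ => (hint _).mul_const _
        · intro i _
          exact (integrable_finset_sum _ fun j _ => (hint _).mul_const _).const_mul _
      rw [key]
      refine integral_nonneg_complex ?_ ?_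
      · refine integrable_finset_sum _ fun i _ => ?_
        exact (integrable_finset_sum _ fun j _ => (hint _).mul_const _).const_mul _
      · filter_upwards [hpd] with ω hω
        exact (hω.1 n g).dotProduct_mulVec_nonneg x
  · -- normalization
    have : ∫ ω, φ ω 1 ∂μ = ∫ _ω, (1:ℂ) ∂μ := by
      refine integral_congr_ae ?_
      filter_upwards [hpd] with ω hω
      exact hω.2
    simp [this]
  · -- conjugation invariance
    intro g h
    have h1 : ∫ ω, φ ω (h⁻¹ * g * h) ∂μ = ∫ ω, φ (h • ω) g ∂μ := by
      refine integral_congr_ae ?_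
      filter_upwards [hinv h g] with ω hω
      exact hω.symm
    rw [h1]
    have h2 : ∫ ω, φ (h • ω) g ∂μ = ∫ ω, φ ω g ∂(Measure.map (fun ω => h • ω) μ) := by
      rw [integral_map (hmp h).measurable.aemeasurable]
      rw [(hmp h).map_eq]
      exact (hmeas g).aestronglyMeasurable
    rw [h2, (hmp h).map_eq]
end

section
/- Let Γ be a countable group acting by measure-preserving transformations on a standard probability space (Ω, μ), and assume the fixed-point set Fix(g) = {ω ∈ Ω : g·ω = ω} is measurable for each g ∈ Γ. Then the function τ : Γ → ℝ defined by τ(g) = μ(Fix(g)) is a character: it is a normalized positive definite function on Γ and satisfies τ(h⁻¹ g h) = τ(g) for all g, h ∈ Γ. -/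
open MeasureTheory
open scoped ComplexOrder

lemma key_finite {n : ℕ} {α : Type*} [DecidableEq α] (v : Fin n → α) (x : Fin n → ℂ) :
    0 ≤ ∑ j, ∑ i, (starRingEnd ℂ) (x j) * x i * (if v i = v j then 1 else 0) := by
  set S : α → ℂ := fun y => ∑ i, if v i = y then x i else 0 with hS
  have h1 : ∀ j, ∑ i, (starRingEnd ℂ) (x j) * x i * (if v i = v j then 1 else 0)
      = (starRingEnd ℂ) (x j) * S (v j) := by
    intro j
    rw [hS, Finset.mul_sum]
    refine Finset.sum_congr rfl fun i _ => ?_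
    by_cases h : v i = v j <;> simp [h]
  simp_rw [h1]
  have h2 : ∑ j, (starRingEnd ℂ) (x j) * S (v j)
      = ∑ y ∈ Finset.univ.image v, (starRingEnd ℂ) (S y) * S y := by
    symm
    refine Finset.sum_image' (fun j => (starRingEnd ℂ) (x j) * S (v j)) fun j _ => ?_
    have hSv : S (v j) = ∑ i ∈ Finset.univ.filter (fun i => v i = v j), x i := by
      rw [hS]; simp [Finset.sum_filter]
    rw [hSv, map_sum, Finset.sum_mul]
    refine Finset.sum_congr rfl fun i hi => ?_
    have hvij : v i = v j := (Finset.mem_filter.mp hi).2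
    rw [hvij, hSv]
  rw [h2]
  exact Finset.sum_nonneg fun y _ => star_mul_self_nonneg (S y)

lemma integral_nonneg_cplx {Ω : Type*} [MeasurableSpace Ω] {μ : Measure Ω} {f : Ω → ℂ}
    (hf : Integrable f μ) (h : ∀ ω, 0 ≤ f ω) : 0 ≤ ∫ ω, f ω ∂μ := by
  rw [Complex.nonneg_iff]
  have hre : (∫ ω, f ω ∂μ).re = ∫ ω, (f ω).re ∂μ := (integral_re hf).symm
  have him : (∫ ω, f ω ∂μ).im = ∫ ω, (f ω).im ∂μ := (integral_im hf).symm
  constructor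
  · rw [hre]
    exact integral_nonneg fun ω => (Complex.nonneg_iff.mp (h ω)).1
  · rw [him]
    have h0 : ∀ ω, Complex.im (f ω) = 0 := fun ω => (Complex.nonneg_iff.mp (h ω)).2.symm
    simp [h0]


/-- The expectation of the invariant random subgroup of stabilizers of a p.m.p. action is
a character: `τ(g) = μ(Fix(g))` is a normalized positive definite function invariant
under conjugation. -/
theorem measure_of_fixed_points_is_character
    {Γ Ω : Type*} [Group Γ] [Countable Γ]
    [MeasurableSpace Ω] [StandardBorelSpace Ω]
    (μ : Measure Ω) [IsProbabilityMeasure μ]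
    [MulAction Γ Ω]
    (hmp : ∀ g : Γ, MeasurePreserving (fun ω => g • ω) μ μ)
    (hfix : ∀ g : Γ, MeasurableSet {ω : Ω | g • ω = ω}) :
    IsNormalizedPositiveDefinite
        (fun g : Γ => ((μ {ω : Ω | g • ω = ω}).toReal : ℂ)) ∧
      ∀ g h : Γ, (μ {ω : Ω | (h⁻¹ * g * h) • ω = ω}).toReal
        = (μ {ω : Ω | g • ω = ω}).toReal := by
  classical
  refine ⟨⟨?_, ?_⟩, ?_⟩
  · -- positive definite
    intro n g
    have hset : ∀ i j : Fin n, {ω : Ω | ((g j)⁻¹ * g i) • ω = ω}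
        = {ω : Ω | g i • ω = g j • ω} := by
      intro i j; ext ω
      simp [Set.mem_setOf_eq, mul_smul, inv_smul_eq_iff]
    have hmeas : ∀ i j : Fin n, MeasurableSet {ω : Ω | g i • ω = g j • ω} := by
      intro i j; rw [← hset i j]; exact hfix _
    set s : Fin n → Fin n → Set Ω := fun i j => {ω : Ω | g i • ω = g j • ω} with hs
    constructor
    · -- Hermitian
      ext i j
      simp only [Matrix.conjTranspose_apply, Matrix.of_apply, Complex.star_def,
        Complex.conj_ofReal]
      have hsym : {ω : Ω | ((g i)⁻¹ * g j) • ω = ω} = {ω : Ω | ((g j)⁻¹ * g i) • ω = ω} := by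
        rw [hset j i, hset i j]
        ext ω; simp only [Set.mem_setOf_eq]; exact ⟨Eq.symm, Eq.symm⟩
      rw [hsym]
    · intro x
      set F : Fin n → Fin n → Ω → ℂ := fun j i ω =>
        (starRingEnd ℂ) (x j) * x i * (((s j i).indicator 1 ω : ℝ) : ℂ) with hF2
      have hint : ∀ j i : Fin n, Integrable (F j i) μ := by
        intro j i
        exact (((integrable_const (1:ℝ)).indicator (hmeas j i)).ofReal).const_mul _
      have hτ : ∀ j i : Fin n,
          ((μ (s j i)).toReal : ℂ) = ∫ ω, (((s j i).indicator 1 ω : ℝ) : ℂ) ∂μ := by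
        intro j i
        rw [show ∫ ω, (((s j i).indicator 1 ω : ℝ) : ℂ) ∂μ
            = ((∫ ω, (s j i).indicator 1 ω ∂μ : ℝ) : ℂ) from integral_ofReal,
          integral_indicator_one (hmeas j i)]
        rfl
      have main : ∑ j, (starRingEnd ℂ) (x j) *
            ∑ i, ((μ {ω : Ω | ((g i)⁻¹ * g j) • ω = ω}).toReal : ℂ) * x i
          = ∫ ω, ∑ j, ∑ i, F j i ω ∂μ := by
        rw [integral_finset_sum _ (fun j _ => integrable_finset_sum _ fun i _ => hint j i)]
        refine Finset.sum_congr rfl fun j _ => ?_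
        rw [integral_finset_sum _ fun i _ => hint j i, Finset.mul_sum]
        refine Finset.sum_congr rfl fun i _ => ?_
        rw [hF2]
        simp only
        rw [integral_const_mul, ← hτ j i]
        simp only [hs]
        rw [hset j i]
        ring
      have goal_eq : (x.sum fun i xi => x.sum fun j xj => star xi * (Matrix.of fun i j : Fin n =>
            ((μ {ω : Ω | ((g j)⁻¹ * g i) • ω = ω}).toReal : ℂ)) i j * xj)
          = ∑ j, (starRingEnd ℂ) (x j) *
            ∑ i, ((μ {ω : Ω | ((g i)⁻¹ * g j) • ω = ω}).toReal : ℂ) * x i := by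
        rw [Finsupp.sum_fintype _ _ (by simp)]
        refine Finset.sum_congr rfl fun j _ => ?_
        rw [Finsupp.sum_fintype _ _ (by simp), Finset.mul_sum]
        refine Finset.sum_congr rfl fun i _ => ?_
        rw [mul_assoc]
        rfl
      have h0 : (0 : ℂ) ≤ ∫ ω, ∑ j, ∑ i, F j i ω ∂μ := by
        refine integral_nonneg_cplx (integrable_finset_sum _ fun j _ =>
          integrable_finset_sum _ fun i _ => hint j i) fun ω => ?_
        have hk := key_finite (fun k : Fin n => g k • ω) x
        refine le_of_le_of_eq hk ?_
        refine Finset.sum_congr rfl fun j _ => Finset.sum_congr rfl fun i _ => ?_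
        rw [hF2]
        simp only
        rw [show s j i = {ω' : Ω | g j • ω' = g i • ω'} from rfl]
        rw [Set.indicator_apply]
        simp only [Set.mem_setOf_eq, Pi.one_apply]
        by_cases h : g i • ω = g j • ω
        · rw [if_pos h, if_pos h.symm]
          norm_num
        · have h' : ¬ g j • ω = g i • ω := fun hh => h hh.symm
          rw [if_neg h, if_neg h']
          norm_num
      calc (0:ℂ) ≤ ∫ ω, ∑ j, ∑ i, F j i ω ∂μ := h0
        _ = _ := by rw [← main, ← goal_eq]
  · -- normalized
    have h1 : {ω : Ω | (1 : Γ) • ω = ω} = Set.univ := by ext ω; simp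
    simp [h1]
  · -- conjugation invariance
    intro g h
    have hpre : {ω : Ω | (h⁻¹ * g * h) • ω = ω} = (fun ω => h • ω) ⁻¹' {ω | g • ω = ω} := by
      ext ω
      simp [Set.mem_setOf_eq, mul_smul, inv_smul_eq_iff]
    rw [hpre, (hmp h).measure_preimage (hfix g).nullMeasurableSet]
end
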